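/- The matrix X₁ is invertible, and for every eigenvalue λ ∈ ℂ of W₁ = X₁⁻¹Y₁ there exists φ, with either φ = 1 or φ = cos²(kπ/N) for some k ∈ {1,…,N−1}, such that (y₂ − λc₂)² = 4φ·(y₁ − λc₁)(y₃ − λc₃). -/

import Mathlib

/-- The `(N-1)×(N-1)` tridiagonal complex matrix with 1-indexed subdiagonal entries
`sub_{i+1}` (at position `(i+1, i)`), diagonal entries `dia_i` and superdiagonal
entries `sup_i` (at position `(i, i+1)`), built from real data. -/
def triMatC (n : ℕ) (sub dia sup : ℕ → ℝ) : Matrix (Fin n) (Fin n) ℂ :=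
  Matrix.of fun i j =>
    if i.val = j.val then (dia (i.val + 1) : ℂ)
    else if i.val + 1 = j.val then (sup (i.val + 1) : ℂ)
    else if j.val + 1 = i.val then (sub (i.val + 1) : ℂ)
    else 0

/-- `μ` is an eigenvalue of the square complex matrix `M` if `M v = μ v` for some
nonzero vector `v`. -/
def IsEig {n : ℕ} (M : Matrix (Fin n) (Fin n) ℂ) (μ : ℂ) : Prop :=
  ∃ v : Fin n → ℂ, v ≠ 0 ∧ M.mulVec v = μ • v

/-- `c₁ = (2 + δz)/(24 δv)`. -/
noncomputable def cc1 (δv δz : ℝ) : ℝ := (2 + δz) / (24 * δv)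

/-- `c₂ = 5/(6 δv)`. -/
noncomputable def cc2 (δv : ℝ) : ℝ := 5 / (6 * δv)

/-- `c₃ = (2 - δz)/(24 δv)`. -/
noncomputable def cc3 (δv δz : ℝ) : ℝ := (2 - δz) / (24 * δv)

/-- `y₁ = -c/(2δz) - (c + c δz²/12)/δz²`. -/
noncomputable def yy1 (c δz : ℝ) : ℝ := -c / (2 * δz) - (c + c * δz ^ 2 / 12) / δz ^ 2

/-- `y₂ = 2 (c + c δz²/12)/δz²`. -/
noncomputable def yy2 (c δz : ℝ) : ℝ := 2 * (c + c * δz ^ 2 / 12) / δz ^ 2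

/-- `y₃ = c/(2δz) - (c + c δz²/12)/δz²`. -/
noncomputable def yy3 (c δz : ℝ) : ℝ := c / (2 * δz) - (c + c * δz ^ 2 / 12) / δz ^ 2

/-- The `(N-1)×(N-1)` tridiagonal Toeplitz matrix `X₁` with subdiagonal `c₁`,
diagonal `c₂` and superdiagonal `c₃`. -/
noncomputable def X1mat (δv δz : ℝ) (N : ℕ) : Matrix (Fin (N - 1)) (Fin (N - 1)) ℂ :=
  triMatC (N - 1) (fun _ => cc1 δv δz) (fun _ => cc2 δv) (fun _ => cc3 δv δz)

/-- The `(N-1)×(N-1)` tridiagonal Toeplitz matrix `Y₁` with subdiagonal `y₁`,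
diagonal `y₂` and superdiagonal `y₃`. -/
noncomputable def Y1mat (c δz : ℝ) (N : ℕ) : Matrix (Fin (N - 1)) (Fin (N - 1)) ℂ :=
  triMatC (N - 1) (fun _ => yy1 c δz) (fun _ => yy2 c δz) (fun _ => yy3 c δz)

section Aux

open Complex in
private lemma seq_lemma8 (N : ℕ) (hN : 2 ≤ N) (a b c : ℂ) (w : ℕ → ℂ)
    (hw0 : w 0 = 0) (hwN : ∀ k, N - 1 < k → w k = 0)
    (hrec : ∀ j, j < N - 1 → a * w j + b * w (j + 1) + c * w (j + 2) = 0)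
    (hex : ∃ k, w k ≠ 0) :
    ∃ φ : ℝ, (φ = 1 ∨ ∃ k, 1 ≤ k ∧ k ≤ N - 1 ∧ φ = Real.cos (k * Real.pi / N) ^ 2) ∧
      b ^ 2 = 4 * (φ : ℂ) * a * c := by
  set n := N - 1 with hn
  have hnN : n + 1 = N := by omega
  by_cases hd : b ^ 2 = 4 * a * c
  · exact ⟨1, Or.inl rfl, by push_cast; linear_combination hd⟩
  -- c ≠ 0
  have hc : c ≠ 0 := by
    intro hc0
    have hb : b ≠ 0 := fun hb0 => hd (by rw [hb0, hc0]; ring)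
    have hall : ∀ k, k ≤ n → w k = 0 := by
      intro k
      induction k with
      | zero => intro _; exact hw0
      | succ m ih =>
        intro hm
        have h1 := hrec m (by omega)
        rw [ih (by omega)] at h1
        have : b * w (m + 1) = 0 := by linear_combination h1 - w (m + 2) * hc0
        exact (mul_eq_zero.mp this).resolve_left hb
    obtain ⟨k, hk⟩ := hex
    rcases le_or_gt k n with h | h
    · exact hk (hall k h)
    · exact hk (hwN k h)
  have h4c : (4 : ℂ) * c ≠ 0 := by
    simp [hc]
  -- roots of the characteristic polynomial
  set s : ℂ := (b ^ 2 - 4 * a * c) ^ (((2 : ℕ) : ℂ)⁻¹) with hsdef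
  have hs : s ^ 2 = b ^ 2 - 4 * a * c := Complex.cpow_nat_inv_pow _ two_ne_zero
  have hs0 : s ≠ 0 := by
    intro h0
    apply hd
    rw [h0] at hs
    linear_combination -hs
  obtain ⟨r₁, hr1def⟩ : ∃ r : ℂ, r = (-b + s) / (2 * c) := ⟨_, rfl⟩
  obtain ⟨r₂, hr2def⟩ : ∃ r : ℂ, r = (-b - s) / (2 * c) := ⟨_, rfl⟩
  have he1 : (2 * c) * r₁ = -b + s := by rw [hr1def]; field_simp
  have he2 : (2 * c) * r₂ = -b - s := by rw [hr2def]; field_simp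
  have hroot1 : c * r₁ ^ 2 + b * r₁ + a = 0 := by
    have h4 : (4 * c) * (c * r₁ ^ 2 + b * r₁ + a) = 0 := by
      linear_combination (2 * c * r₁ + b + s) * he1 + hs
    exact (mul_eq_zero.mp h4).resolve_left h4c
  have hroot2 : c * r₂ ^ 2 + b * r₂ + a = 0 := by
    have h4 : (4 * c) * (c * r₂ ^ 2 + b * r₂ + a) = 0 := by
      linear_combination (2 * c * r₂ + b - s) * he2 + hs
    exact (mul_eq_zero.mp h4).resolve_left h4c
  have hrne : r₁ ≠ r₂ := by
    intro h
    apply hs0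
    have h2 : (2 * c) * r₁ = (2 * c) * r₂ := by rw [h]
    rw [he1, he2] at h2
    linear_combination h2 / 2
  have hsub : r₁ - r₂ ≠ 0 := sub_ne_zero.mpr hrne
  obtain ⟨t, htdef⟩ : ∃ t : ℕ → ℂ, t = fun i => (r₁ ^ i - r₂ ^ i) / (r₁ - r₂) := ⟨_, rfl⟩
  have trec : ∀ j : ℕ, a * t j + b * t (j + 1) + c * t (j + 2) = 0 := by
    intro j
    rw [htdef]
    field_simp
    linear_combination (r₁ ^ j) * hroot1 - (r₂ ^ j) * hroot2
  -- all w values follow the formula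
  have wform : ∀ k, k ≤ n + 1 → w k = w 1 * t k := by
    intro k
    induction k using Nat.strong_induction_on with
    | _ k ih =>
      match k with
      | 0 => intro _; simp [hw0, htdef]
      | 1 => intro _; rw [htdef]; simp only [pow_one]; rw [div_self hsub, mul_one]
      | (m + 2) =>
        intro hm
        have h1 := hrec m (by omega)
        have h2 := trec m
        rw [ih m (by omega) (by omega), ih (m + 1) (by omega) (by omega)] at h1
        have h3 : c * (w (m + 2) - w 1 * t (m + 2)) = 0 := by
          linear_combination h1 - w 1 * h2
        have := (mul_eq_zero.mp h3).resolve_left hc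
        linear_combination this
  have hw1 : w 1 ≠ 0 := by
    obtain ⟨k, hk⟩ := hex
    have hkn : k ≤ n := by
      by_contra h
      exact hk (hwN k (by omega))
    intro h1
    exact hk (by rw [wform k (by omega), h1, zero_mul])
  -- boundary condition at N
  have hrN : r₁ ^ N = r₂ ^ N := by
    have h0 : w (n + 1) = 0 := hwN _ (by omega)
    rw [wform (n + 1) le_rfl] at h0
    rcases mul_eq_zero.mp h0 with h | h
    · exact absurd h hw1
    · rw [hnN, htdef] at h
      rcases div_eq_zero_iff.mp h with h | h
      · exact sub_eq_zero.mp h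
      · exact absurd h hsub
  -- r₂ ≠ 0 and the root-of-unity q
  have hr2ne : r₂ ≠ 0 := by
    intro h0
    rw [h0, zero_pow (by omega)] at hrN
    have h1 : r₁ = 0 := pow_eq_zero_iff (n := N) (by omega) |>.mp hrN
    exact hrne (h1.trans h0.symm)
  obtain ⟨q, hqdef⟩ : ∃ q : ℂ, q = r₁ / r₂ := ⟨_, rfl⟩
  have hqN : q ^ N = 1 := by
    rw [hqdef, div_pow, hrN, div_self (pow_ne_zero _ hr2ne)]
  have hq1 : q ≠ 1 := by
    intro h
    exact hrne (by rw [hqdef, div_eq_one_iff_eq hr2ne] at h; exact h)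
  haveI : NeZero N := ⟨by omega⟩
  obtain ⟨k, hkN, hkq⟩ := (Complex.isPrimitiveRoot_exp N (by omega)).eq_pow_of_pow_eq_one hqN
  have hk0 : k ≠ 0 := by
    intro h0
    rw [h0, pow_zero] at hkq
    exact hq1 hkq.symm
  -- q = exp(θ i)^2 with θ = k π / N
  set θ : ℝ := k * Real.pi / N with hθdef
  obtain ⟨u, hudef⟩ : ∃ u : ℂ, u = Complex.exp (θ * Complex.I) := ⟨_, rfl⟩
  have hNne : (N : ℂ) ≠ 0 := Nat.cast_ne_zero.mpr (by omega)
  have hqu : q = u ^ 2 := by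
    rw [← hkq, hudef, ← Complex.exp_nat_mul, ← Complex.exp_nat_mul]
    congr 1
    push_cast [hθdef]
    field_simp
  have hue : u * Complex.exp (-(θ : ℂ) * Complex.I) = 1 := by
    rw [hudef, ← Complex.exp_add]
    simp
  have hcos : u + Complex.exp (-(θ : ℂ) * Complex.I) = 2 * Complex.cos θ := by
    rw [Complex.cos, hudef]
    ring_nf
  have hkey : 2 * Complex.cos (θ : ℂ) * u = 1 + u ^ 2 := by
    linear_combination hue - u * hcos
  refine ⟨Real.cos θ ^ 2, Or.inr ⟨k, by omega, by omega, rfl⟩, ?_⟩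
  have hq4 : (q + 1) ^ 2 = 4 * ((Real.cos θ ^ 2 : ℝ) : ℂ) * q := by
    push_cast
    rw [hqu]
    linear_combination (-(u ^ 2 + 1 + 2 * Complex.cos (θ : ℂ) * u)) * hkey
  -- translate back to a, b, c
  have hb : b = -c * (r₁ + r₂) := by
    linear_combination (he1 + he2) / 2
  have ha : a = c * (r₁ * r₂) := by
    linear_combination hroot1 - r₁ * hb
  have hr1q : r₁ = q * r₂ := by
    rw [hqdef]; field_simp
  rw [hb, ha, hr1q]
  linear_combination (c ^ 2 * r₂ ^ 2) * hq4

/-- Kernel lemma for tridiagonal Toeplitz complex matrices. -/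
private lemma tri_kernel8 (N : ℕ) (hN : 2 ≤ N) (a b c : ℂ)
    (M : Matrix (Fin (N - 1)) (Fin (N - 1)) ℂ)
    (hM : ∀ i j : Fin (N - 1), M i j =
      if (i : ℕ) = j then b else if (i : ℕ) + 1 = j then c
        else if (j : ℕ) + 1 = i then a else 0)
    (v : Fin (N - 1) → ℂ) (hv : v ≠ 0) (h0 : M.mulVec v = 0) :
    ∃ φ : ℝ, (φ = 1 ∨ ∃ k, 1 ≤ k ∧ k ≤ N - 1 ∧ φ = Real.cos (k * Real.pi / N) ^ 2) ∧
      b ^ 2 = 4 * (φ : ℂ) * a * c := by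
  obtain ⟨w, hwdef⟩ : ∃ w : ℕ → ℂ,
      w = fun k => if h : 1 ≤ k ∧ k ≤ (N - 1) then v ⟨k - 1, by omega⟩ else 0 := ⟨_, rfl⟩
  have hw0 : w 0 = 0 := by rw [hwdef]; simp
  have hwhigh : ∀ k, (N - 1) < k → w k = 0 := by
    intro k hk
    rw [hwdef]
    exact dif_neg (by omega)
  have hwv : ∀ (x : Fin (N - 1)), w (x.val + 1) = v x := by
    intro x
    have hx : 1 ≤ x.val + 1 ∧ x.val + 1 ≤ N - 1 := ⟨by omega, by omega⟩
    simp only [hwdef]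
    rw [dif_pos hx]
    exact congrArg v (Fin.ext (by simp only [Fin.val_mk]; omega))
  apply seq_lemma8 N hN a b c w hw0 hwhigh
  · -- the recurrence
    intro j hj
    have hrow := congrFun h0 ⟨j, hj⟩
    simp only [Matrix.mulVec, dotProduct, Pi.zero_apply] at hrow
    have hpt : ∀ x : Fin (N - 1), M ⟨j, hj⟩ x * v x =
        (if (x : ℕ) + 1 = j then a * v x else 0) +
        ((if (x : ℕ) = j then b * v x else 0) +
         (if (x : ℕ) = j + 1 then c * v x else 0)) := by
      intro x
      rw [hM]
      simp only [Fin.val_mk]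
      split_ifs <;> (try omega) <;> ring
    rw [Finset.sum_congr rfl (fun x _ => hpt x), Finset.sum_add_distrib,
      Finset.sum_add_distrib] at hrow
    have e1 : (∑ x : Fin (N - 1), if (x : ℕ) + 1 = j then a * v x else 0) = a * w j := by
      match j, hj with
      | 0, hj =>
        rw [hw0, mul_zero]
        exact Finset.sum_eq_zero fun x _ => if_neg (by omega)
      | (m + 1), hj =>
        rw [Finset.sum_eq_single (⟨m, by omega⟩ : Fin (N - 1)) (fun x _ hx => if_neg (by
          intro hc
          exact hx (Fin.ext (by simp only [Fin.val_mk]; omega)))) (by simp)]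
        rw [if_pos rfl, hwv ⟨m, by omega⟩]
    have e2 : (∑ x : Fin (N - 1), if (x : ℕ) = j then b * v x else 0) = b * w (j + 1) := by
      rw [Finset.sum_eq_single (⟨j, hj⟩ : Fin (N - 1)) (fun x _ hx => if_neg (by
        intro hc
        exact hx (Fin.ext (by simp only [Fin.val_mk]; omega)))) (by simp)]
      rw [if_pos rfl, hwv ⟨j, hj⟩]
    have e3 : (∑ x : Fin (N - 1), if (x : ℕ) = j + 1 then c * v x else 0) = c * w (j + 2) := by
      by_cases hj2 : j + 1 < N - 1
      · rw [Finset.sum_eq_single (⟨j + 1, hj2⟩ : Fin (N - 1)) (fun x _ hx => if_neg (by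
          intro hc
          exact hx (Fin.ext (by simp only [Fin.val_mk]; omega)))) (by simp)]
        rw [if_pos rfl, hwv ⟨j + 1, hj2⟩]
      · rw [hwhigh (j + 2) (by omega), mul_zero]
        exact Finset.sum_eq_zero fun x _ => if_neg (by omega)
    rw [e1, e2, e3] at hrow
    linear_combination hrow
  · obtain ⟨x, hx⟩ := Function.ne_iff.mp hv
    exact ⟨x.val + 1, by rw [hwv x]; simpa using hx⟩

end Aux

/-- `X₁` is invertible and, for every eigenvalue `λ` of `W₁ = X₁⁻¹ Y₁`, there is `φ`
with `φ = 1` or `φ = cos²(kπ/N)` for some `k ∈ {1, …, N-1}` such that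
`(y₂ - λc₂)² = 4 φ (y₁ - λc₁)(y₃ - λc₃)`. -/
theorem stmt8 (c δv δz : ℝ) (hc : 0 < c) (hδv : 0 < δv) (hδz0 : 0 < δz)
    (hδz2 : δz < 2) (N : ℕ) (hN : 2 ≤ N) :
    IsUnit (X1mat δv δz N).det ∧
    ∀ lam : ℂ, IsEig ((X1mat δv δz N)⁻¹ * Y1mat c δz N) lam →
      ∃ φ : ℝ,
        (φ = 1 ∨ ∃ k, 1 ≤ k ∧ k ≤ N - 1 ∧ φ = Real.cos (k * Real.pi / N) ^ 2) ∧
        ((yy2 c δz : ℂ) - lam * (cc2 δv : ℂ)) ^ 2 =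
          4 * (φ : ℂ) * ((yy1 c δz : ℂ) - lam * (cc1 δv δz : ℂ)) *
            ((yy3 c δz : ℂ) - lam * (cc3 δv δz : ℂ)) := by
  have hdet : IsUnit (X1mat δv δz N).det := by
    rw [isUnit_iff_ne_zero]
    intro hdet0
    obtain ⟨v, hv, hv0⟩ := Matrix.exists_mulVec_eq_zero_iff.mpr hdet0
    obtain ⟨φ, hφ, heq⟩ := tri_kernel8 N hN (cc1 δv δz) (cc2 δv) (cc3 δv δz)
      (X1mat δv δz N) (fun i j => by
        simp only [X1mat, triMatC, Matrix.of_apply]) v hv hv0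
    have hφ0 : 0 ≤ φ ∧ φ ≤ 1 := by
      rcases hφ with h | ⟨k, _, _, h⟩
      · simp [h]
      · subst h
        exact ⟨sq_nonneg _, Real.cos_sq_le_one _⟩
    have hre : (cc2 δv) ^ 2 = 4 * φ * (cc1 δv δz) * (cc3 δv δz) := by exact_mod_cast heq
    simp only [cc1, cc2, cc3] at hre
    have hδv' : δv ≠ 0 := ne_of_gt hδv
    field_simp at hre
    nlinarith [hφ0.1, hφ0.2, sq_nonneg δz, mul_pos hδv hδv, sq_nonneg (δz * δv)]
  refine ⟨hdet, ?_⟩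
  rintro lam ⟨v, hv, hveq⟩
  have hY : (Y1mat c δz N).mulVec v = lam • (X1mat δv δz N).mulVec v := by
    have h1 := congrArg (fun u => (X1mat δv δz N).mulVec u) hveq
    rw [Matrix.mulVec_mulVec, ← Matrix.mul_assoc, Matrix.mul_nonsing_inv _ hdet,
      Matrix.one_mul, Matrix.mulVec_smul] at h1
    exact h1
  have h0 : (Y1mat c δz N - lam • X1mat δv δz N).mulVec v = 0 := by
    rw [Matrix.sub_mulVec, Matrix.smul_mulVec, hY, sub_self]
  exact tri_kernel8 N hN ((yy1 c δz : ℂ) - lam * (cc1 δv δz : ℂ))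
    ((yy2 c δz : ℂ) - lam * (cc2 δv : ℂ)) ((yy3 c δz : ℂ) - lam * (cc3 δv δz : ℂ))
    _ (fun i j => by
      simp only [Y1mat, X1mat, triMatC, Matrix.sub_apply, Matrix.smul_apply,
        Matrix.of_apply, smul_eq_mul]
      split_ifs <;> ring) v hv h0
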